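/- Let N ≥ 1 and let ρ : ℝ^N → ℝ be a C³ function with ρ(x) > 0 for all x. Then for every x ∈ ℝ^N and every j ∈ {1, …, N}: ρ(x) ( ∂_j(Δ(ln ρ))(x) + ½ ∂_j(|∇(ln ρ)|²)(x) ) = Σ_{i=1}^N ∂_i( ρ ∂_i∂_j(ln ρ) )(x). Consequently, for κ(ρ) = κ̄/ρ the Korteweg tensor divergence can be written in divergence form: div K = κ̄ div( ρ ∇∇(ln ρ) ). -/

import Mathlib

open Real

/-- The `i`-th partial derivative of a function on `ℝ^N`. -/
noncomputable def pd {N : ℕ} (i : Fin N) (f : (Fin N → ℝ) → ℝ) : (Fin N → ℝ) → ℝ :=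
  fun x => fderiv ℝ f x (Pi.single i 1)

/-- The Laplacian on `ℝ^N`. -/
noncomputable def lap {N : ℕ} (f : (Fin N → ℝ) → ℝ) : (Fin N → ℝ) → ℝ :=
  fun x => ∑ i, pd i (pd i f) x

/-- The squared norm of the gradient, `|∇f|²`. -/
noncomputable def gradsq {N : ℕ} (f : (Fin N → ℝ) → ℝ) : (Fin N → ℝ) → ℝ :=
  fun x => ∑ i, (pd i f x) ^ 2

section helpers
variable {N : ℕ} {f g : (Fin N → ℝ) → ℝ} {x : Fin N → ℝ} {i j : Fin N}

lemma contDiff_pd {n m : WithTop ℕ∞} (hf : ContDiff ℝ n f) (h : m + 1 ≤ n) (i : Fin N) :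
    ContDiff ℝ m (pd i f) :=
  (hf.fderiv_right h).clm_apply contDiff_const

lemma pd_mul (hf : DifferentiableAt ℝ f x) (hg : DifferentiableAt ℝ g x) :
    pd i (fun y => f y * g y) x = pd i f x * g x + f x * pd i g x := by
  simp [pd, fderiv_fun_mul hf hg]
  ring

lemma pd_const_mul (hf : DifferentiableAt ℝ f x) (c : ℝ) :
    pd i (fun y => c * f y) x = c * pd i f x := by
  simp [pd, fderiv_const_mul hf c]

lemma pd_sub (hf : DifferentiableAt ℝ f x) (hg : DifferentiableAt ℝ g x) :
    pd i (fun y => f y - g y) x = pd i f x - pd i g x := by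
  simp [pd, fderiv_fun_sub hf hg]

lemma pd_sum {κ : Type*} (s : Finset κ) (F : κ → (Fin N → ℝ) → ℝ)
    (hf : ∀ k ∈ s, DifferentiableAt ℝ (F k) x) :
    pd i (fun y => ∑ k ∈ s, F k y) x = ∑ k ∈ s, pd i (F k) x := by
  simp [pd, fderiv_fun_sum hf]

lemma pd_sq (hf : DifferentiableAt ℝ f x) :
    pd i (fun y => f y ^ 2) x = 2 * f x * pd i f x := by
  have h : (fun y => f y ^ 2) = fun y => f y * f y := by funext y; ring
  rw [h, pd_mul hf hf]; ring

lemma pd_log (hf : DifferentiableAt ℝ f x) (hx : f x ≠ 0) :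
    pd i (fun y => Real.log (f y)) x = pd i f x / f x := by
  have := (hf.hasFDerivAt.log hx).fderiv
  simp [pd, this, div_eq_inv_mul]

lemma pd_inv (hg : DifferentiableAt ℝ g x) (hx : g x ≠ 0) :
    pd i (fun y => (g y)⁻¹) x = -(pd i g x) / g x ^ 2 := by
  have h := ((hasFDerivAt_inv hx).comp x hg.hasFDerivAt).fderiv
  simp only [pd, Function.comp_def] at h ⊢
  rw [h]
  simp [pd]
  field_simp

lemma pd_div (hf : DifferentiableAt ℝ f x) (hg : DifferentiableAt ℝ g x) (hx : g x ≠ 0) :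
    pd i (fun y => f y / g y) x = (pd i f x * g x - f x * pd i g x) / g x ^ 2 := by
  have h : (fun y => f y / g y) = fun y => f y * (g y)⁻¹ := by
    funext y; rw [div_eq_mul_inv]
  rw [h, pd_mul (g := fun y => (g y)⁻¹) hf (hg.inv hx), pd_inv hg hx]
  field_simp
  ring

lemma pd_comm (hf : ContDiff ℝ 2 f) : pd i (pd j f) x = pd j (pd i f) x := by
  have hd : DifferentiableAt ℝ (fderiv ℝ f) x :=
    (hf.fderiv_right (m := 1) (le_refl _)).differentiable (by norm_num) x
  have h1 : ∀ (k : Fin N) (v : Fin N → ℝ), pd k (fun y => fderiv ℝ f y v) x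
      = fderiv ℝ (fderiv ℝ f) x (Pi.single k 1) v := by
    intro k v
    simp [pd, fderiv_clm_apply hd (differentiableAt_const v)]
  have hsymm : IsSymmSndFDerivAt ℝ f x :=
    (hf.contDiffAt).isSymmSndFDerivAt (by norm_num)
  calc pd i (pd j f) x = fderiv ℝ (fderiv ℝ f) x (Pi.single i 1) (Pi.single j 1) := h1 i _
    _ = fderiv ℝ (fderiv ℝ f) x (Pi.single j 1) (Pi.single i 1) := hsymm _ _
    _ = pd j (pd i f) x := (h1 j _).symm

lemma pd_swap3 (hf : ContDiff ℝ 3 f) : pd j (pd i (pd i f)) x = pd i (pd i (pd j f)) x := by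
  have hf2 : ContDiff ℝ 2 f := hf.of_le (by norm_num)
  have hfun : pd i (pd j f) = pd j (pd i f) := funext fun y => pd_comm hf2
  rw [hfun]
  exact (pd_comm (contDiff_pd hf (by norm_num) i)).symm

end helpers

/-- `ρ ( ∂_j Δ(ln ρ) + ½ ∂_j |∇(ln ρ)|² ) = Σ_i ∂_i( ρ ∂_i∂_j(ln ρ) )`; consequently, for
`κ(ρ) = κ̄/ρ`, the Korteweg tensor divergence is in divergence form:
`div K = κ̄ div(ρ ∇∇ ln ρ)`. -/
theorem korteweg_divergenceForm (N : ℕ) (hN : 1 ≤ N)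
    (ρ : (Fin N → ℝ) → ℝ) (hρ : ContDiff ℝ 3 ρ) (hpos : ∀ x, 0 < ρ x)
    (x : Fin N → ℝ) (j : Fin N) :
    (ρ x * (pd j (lap (fun y => Real.log (ρ y))) x
        + (1 / 2) * pd j (gradsq (fun y => Real.log (ρ y))) x)
      = ∑ i, pd i (fun y => ρ y * pd i (pd j (fun z => Real.log (ρ z))) y) x) ∧
    (∀ κb : ℝ, 0 < κb →
      pd j (fun y => ρ y * (κb / ρ y) * lap ρ y
          + (1 / 2) * ((κb / ρ y) + ρ y * (-κb / (ρ y) ^ 2)) * gradsq ρ y) x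
        - ∑ i, pd i (fun y => (κb / ρ y) * pd i ρ y * pd j ρ y) x
      = κb * ∑ i, pd i (fun y => ρ y * pd i (pd j (fun z => Real.log (ρ z))) y) x) := by
  set L : (Fin N → ℝ) → ℝ := fun y => Real.log (ρ y) with hLdef
  have hne : ∀ y, ρ y ≠ 0 := fun y => (hpos y).ne'
  have hL : ContDiff ℝ 3 L := hρ.log hne
  have hρd : Differentiable ℝ ρ := hρ.differentiable (by norm_num)
  -- C² and differentiability facts
  have hpd2 : ∀ (f : (Fin N → ℝ) → ℝ), ContDiff ℝ 3 f → ∀ k : Fin N,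
      ContDiff ℝ 2 (pd k f) := fun f hf k => contDiff_pd hf (by norm_num) k
  have hpd1 : ∀ (f : (Fin N → ℝ) → ℝ), ContDiff ℝ 2 f → ∀ k : Fin N,
      ContDiff ℝ 1 (pd k f) := fun f hf k => contDiff_pd hf (by norm_num) k
  have hLd : Differentiable ℝ L := hL.differentiable (by norm_num)
  have hpdLd : ∀ k : Fin N, Differentiable ℝ (pd k L) :=
    fun k => (hpd2 L hL k).differentiable (by norm_num)
  have hpdpdLd : ∀ k l : Fin N, Differentiable ℝ (pd k (pd l L)) :=
    fun k l => (hpd1 _ (hpd2 L hL l) k).differentiable (by norm_num)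
  have hpdρd : ∀ k : Fin N, Differentiable ℝ (pd k ρ) :=
    fun k => (hpd2 ρ hρ k).differentiable (by norm_num)
  have hpdpdρd : ∀ k l : Fin N, Differentiable ℝ (pd k (pd l ρ)) :=
    fun k l => (hpd1 _ (hpd2 ρ hρ l) k).differentiable (by norm_num)
  -- log derivative
  have hlog : ∀ (k : Fin N) (y : Fin N → ℝ), pd k L y = pd k ρ y / ρ y := by
    intro k y
    exact pd_log (hρd y) (hne y)
  -- second derivative swap for L, as functions
  have hswapL : ∀ k : Fin N, pd k (pd j L) = pd j (pd k L) :=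
    fun k => funext fun y => pd_comm (hL.of_le (by norm_num))
  constructor
  · -- Part 1
    have e1 : pd j (lap L) x = ∑ i, pd j (pd i (pd i L)) x := by
      show pd j (fun y => ∑ i, pd i (pd i L) y) x = _
      exact pd_sum Finset.univ _ (fun k _ => (hpdpdLd k k) x)
    have e2 : pd j (gradsq L) x = ∑ i, 2 * pd i L x * pd j (pd i L) x := by
      show pd j (fun y => ∑ i, (pd i L y) ^ 2) x = _
      rw [pd_sum Finset.univ (fun k y => pd k L y ^ 2) (fun k _ => ((hpdLd k x).pow 2))]
      exact Finset.sum_congr rfl fun k _ => pd_sq (hpdLd k x)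
    have key : ∀ i : Fin N, pd i (fun y => ρ y * pd i (pd j L) y) x
        = pd i ρ x * pd i (pd j L) x + ρ x * pd i (pd i (pd j L)) x :=
      fun i => pd_mul (hρd x) (hpdpdLd i j x)
    rw [e1, e2, Finset.sum_congr rfl fun i _ => key i]
    have expand : ρ x * (∑ i, pd j (pd i (pd i L)) x
        + 1 / 2 * ∑ i, 2 * pd i L x * pd j (pd i L) x)
        = ∑ i : Fin N, (ρ x * pd j (pd i (pd i L)) x
            + 1 / 2 * (ρ x * (2 * pd i L x * pd j (pd i L) x))) := by
      rw [Finset.sum_add_distrib, ← Finset.mul_sum, ← Finset.mul_sum, ← Finset.mul_sum]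
      ring
    rw [expand]
    refine Finset.sum_congr rfl fun i _ => ?_
    have h3 : pd j (pd i (pd i L)) x = pd i (pd i (pd j L)) x := pd_swap3 hL
    have h2 : pd j (pd i L) x = pd i (pd j L) x := by rw [← hswapL i]
    have hlx : ρ x * pd i L x = pd i ρ x := by
      rw [hlog i x, mul_div_assoc', mul_div_cancel_left₀ _ (hne x)]
    rw [h3, h2]
    calc ρ x * pd i (pd i (pd j L)) x + 1 / 2 * (ρ x * (2 * pd i L x * pd i (pd j L) x))
        = ρ x * pd i (pd i (pd j L)) x + (ρ x * pd i L x) * pd i (pd j L) x := by ring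
      _ = pd i ρ x * pd i (pd j L) x + ρ x * pd i (pd i (pd j L)) x := by rw [hlx]; ring
  · -- Part 2
    intro κb hκ
    -- first term simplifies to κb * lap ρ
    have funeq1 : (fun y => ρ y * (κb / ρ y) * lap ρ y
        + (1 / 2) * ((κb / ρ y) + ρ y * (-κb / (ρ y) ^ 2)) * gradsq ρ y)
        = fun y => κb * lap ρ y := by
      funext y
      have h := hne y
      field_simp
      ring
    -- Q i := pd i ρ * pd j ρ / ρ
    set Q : Fin N → (Fin N → ℝ) → ℝ := fun i y => pd i ρ y * pd j ρ y / ρ y with hQ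
    have hQd : ∀ i : Fin N, Differentiable ℝ (Q i) := by
      intro i
      have h : Q i = fun y => pd i ρ y * pd j ρ y * (ρ y)⁻¹ :=
        funext fun y => div_eq_mul_inv _ _
      rw [h]
      exact ((hpdρd i).mul (hpdρd j)).mul (hρd.inv hne)
    have funeq2 : ∀ i : Fin N, (fun y => (κb / ρ y) * pd i ρ y * pd j ρ y)
        = fun y => κb * Q i y := by
      intro i; funext y
      have h := hne y
      simp only [hQ]
      field_simp
    have funeq3 : ∀ i : Fin N, (fun y => ρ y * pd i (pd j L) y)
        = fun y => pd i (pd j ρ) y - Q i y := by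
      intro i; funext y
      have h := hne y
      have hjL : pd j L = fun z => pd j ρ z / ρ z := funext fun z => hlog j z
      rw [hjL, pd_div (hpdρd j y) (hρd y) h]
      simp only [hQ]
      field_simp
    have lapd : pd j (lap ρ) x = ∑ i, pd j (pd i (pd i ρ)) x := by
      show pd j (fun y => ∑ i, pd i (pd i ρ) y) x = _
      exact pd_sum Finset.univ _ (fun k _ => (hpdpdρd k k) x)
    have hlapd : DifferentiableAt ℝ (lap ρ) x := by
      show DifferentiableAt ℝ (fun y => ∑ i, pd i (pd i ρ) y) x
      exact DifferentiableAt.fun_sum fun k _ => hpdpdρd k k x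
    rw [funeq1]
    rw [show pd j (fun y => κb * lap ρ y) x = κb * pd j (lap ρ) x from
      pd_const_mul hlapd κb]
    rw [lapd]
    rw [Finset.sum_congr rfl fun (i : Fin N) _ => pd_swap3 (f := ρ) (i := i) (j := j) hρ]
    have eL : (∑ i, pd i (fun y => (κb / ρ y) * pd i ρ y * pd j ρ y) x)
        = ∑ i, κb * pd i (Q i) x :=
      Finset.sum_congr rfl fun i _ => by
        rw [funeq2 i]; exact pd_const_mul (hQd i x) κb
    have eR : (∑ i, pd i (fun y => ρ y * pd i (pd j L) y) x)
        = ∑ i, (pd i (pd i (pd j ρ)) x - pd i (Q i) x) :=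
      Finset.sum_congr rfl fun i _ => by
        rw [funeq3 i]; exact pd_sub (hpdpdρd i j x) (hQd i x)
    rw [eL, eR, Finset.mul_sum, Finset.mul_sum, ← Finset.sum_sub_distrib]
    exact Finset.sum_congr rfl fun i _ => by ring
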